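/- For the ISTA iterates on the ℓ1-regularized PageRank objective, the support of every iterate is contained in the support of the optimal solution: supp(q_k) ⊆ supp(q*) for all k, where q* is the unique minimizer of ψ. -/

import Mathlib

open Matrix

private lemma shrink_mono (t x y : ℝ) (ht : 0 ≤ t) (hxy : x ≤ y) :
    (if t ≤ x then x - t else if x ≤ -t then x + t else 0) ≤
    (if t ≤ y then y - t else if y ≤ -t then y + t else 0) := by
  split_ifs <;> linarith

private lemma shrink_nonneg (t x : ℝ) (ht : 0 ≤ t) (hx : 0 ≤ x) :
    0 ≤ (if t ≤ x then x - t else if x ≤ -t then x + t else 0) := by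
  split_ifs <;> linarith

/-- For the ISTA iterates on the ℓ1-regularized PageRank objective (with `q_0 = 0`,
`s ≥ 0`, `‖s‖_∞ ≥ ρ`, converging to the unique minimizer `q*` of `ψ`), the support of
every iterate is contained in the support of the optimal solution:
`supp(q_k) ⊆ supp(q*)` for all `k`. -/
theorem ista_support_subset_optimal_support {n : ℕ}
    (A : Matrix (Fin n) (Fin n) ℝ) (hA : A.IsSymm)
    (hAnn : ∀ i j, 0 ≤ A i j) (hAdiag : ∀ i, A i i = 0)
    (d : Fin n → ℝ) (hd : ∀ i, d i = ∑ j, A i j) (hdpos : ∀ i, 0 < d i)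
    (α : ℝ) (hα : α ∈ Set.Ioo (0 : ℝ) 1) (ρ : ℝ) (hρ : 0 < ρ)
    (s : Fin n → ℝ) (hs : ∀ i, 0 ≤ s i) (hs1 : ∑ i, s i = 1)
    (hsρ : ∃ i, ρ ≤ |s i|)
    (Dinvhalf : Matrix (Fin n) (Fin n) ℝ)
    (hDinvhalf : Dinvhalf = Matrix.diagonal fun i => (Real.sqrt (d i))⁻¹)
    (Q : Matrix (Fin n) (Fin n) ℝ)
    (hQ : Q = α • (1 : Matrix (Fin n) (Fin n) ℝ) +
      ((1 - α) / 2) • ((1 : Matrix (Fin n) (Fin n) ℝ) - Dinvhalf * A * Dinvhalf))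
    (g : (Fin n → ℝ) → (Fin n → ℝ))
    (hg : ∀ q, g q = Q.mulVec q - α • Dinvhalf.mulVec s)
    (f : (Fin n → ℝ) → ℝ)
    (hf : ∀ q, f q = (1 / 2) * (q ⬝ᵥ Q.mulVec q) - α * (s ⬝ᵥ Dinvhalf.mulVec q))
    (ψ : (Fin n → ℝ) → ℝ)
    (hψ : ∀ q, ψ q = ρ * α * ∑ i, Real.sqrt (d i) * |q i| + f q)
    (q : ℕ → Fin n → ℝ) (hq0 : q 0 = 0)
    (hupd : ∀ k i, q (k + 1) i =
      if ρ * α * Real.sqrt (d i) ≤ q k i - g (q k) i then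
        q k i - g (q k) i - ρ * α * Real.sqrt (d i)
      else if q k i - g (q k) i ≤ -(ρ * α * Real.sqrt (d i)) then
        q k i - g (q k) i + ρ * α * Real.sqrt (d i)
      else 0)
    (qstar : Fin n → ℝ)
    (hmin : ∀ p, ψ qstar ≤ ψ p)
    (hconv : Filter.Tendsto q Filter.atTop (nhds qstar)) :
    ∀ k, {i : Fin n | q k i ≠ 0} ⊆ {i : Fin n | qstar i ≠ 0} := by
  intro k
  obtain ⟨hα0, hα1⟩ := hα
  -- threshold nonneg
  have hτ : ∀ i, 0 ≤ ρ * α * Real.sqrt (d i) := fun i => by positivity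
  -- entries of (1 - Q) are nonnegative
  have hQnn : ∀ i j, 0 ≤ (if i = j then (1:ℝ) else 0) - Q i j := by
    intro i j
    subst hQ hDinvhalf
    simp only [Matrix.add_apply, Matrix.smul_apply, Matrix.one_apply, Matrix.sub_apply,
      Matrix.diagonal_mul, Matrix.mul_diagonal, smul_eq_mul]
    by_cases hij : i = j
    · subst hij
      simp [hAdiag i]
      linarith
    · simp [hij]
      have : 0 ≤ (Real.sqrt (d i))⁻¹ * A i j * (Real.sqrt (d j))⁻¹ := by
        have := hAnn i j
        positivity
      nlinarith
  -- q i - Q.mulVec q i is monotone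
  have hlin : ∀ (x : Fin n → ℝ) (i : Fin n),
      x i - Q.mulVec x i = ∑ j, ((if i = j then (1:ℝ) else 0) - Q i j) * x j := by
    intro x i
    simp [Matrix.mulVec, dotProduct, sub_mul, Finset.sum_sub_distrib, ite_mul]
  have humono : ∀ (x y : Fin n → ℝ), (∀ j, x j ≤ y j) →
      ∀ i, x i - g x i ≤ y i - g y i := by
    intro x y hxy i
    simp only [hg, Pi.sub_apply, Pi.smul_apply, smul_eq_mul]
    have h1 : x i - Q.mulVec x i ≤ y i - Q.mulVec y i := by
      rw [hlin x i, hlin y i]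
      apply Finset.sum_le_sum
      intro j _
      exact mul_le_mul_of_nonneg_left (hxy j) (hQnn i j)
    linarith
  -- monotonicity of iterates
  have hmono : ∀ k i, q k i ≤ q (k + 1) i := by
    intro k
    induction k with
    | zero =>
      intro i
      rw [hupd 0 i, hq0]
      simp only [hg, Pi.zero_apply, Pi.sub_apply, Pi.smul_apply, smul_eq_mul]
      have h0 : (0:ℝ) - ((Q.mulVec 0) i - α * Dinvhalf.mulVec s i)
          = α * Dinvhalf.mulVec s i := by
        simp [Matrix.mulVec_zero]
      rw [h0]
      apply shrink_nonneg _ _ (hτ i)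
      have : 0 ≤ Dinvhalf.mulVec s i := by
        rw [hDinvhalf, Matrix.mulVec_diagonal]
        have := hs i
        positivity
      positivity
    | succ m ih =>
      intro i
      rw [hupd m i, hupd (m+1) i]
      exact shrink_mono _ _ _ (hτ i) (humono _ _ ih i)
  -- nonnegativity
  have hnn : ∀ k i, 0 ≤ q k i := by
    intro k
    induction k with
    | zero => intro i; rw [hq0]; exact le_refl 0
    | succ m ih => intro i; exact le_trans (ih i) (hmono m i)
  -- q k ≤ q m for k ≤ m
  have hle : ∀ k m, k ≤ m → ∀ i, q k i ≤ q m i := by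
    intro k m hkm i
    induction m with
    | zero =>
      have hk0 : k = 0 := Nat.le_zero.mp hkm
      subst hk0; exact le_refl _
    | succ t ih =>
      rcases Nat.lt_or_ge k (t+1) with h | h
      · exact le_trans (ih (by omega)) (hmono t i)
      · have : k = t + 1 := by omega
        subst this; exact le_refl _
  -- q k ≤ qstar
  have hstar : ∀ k i, q k i ≤ qstar i := by
    intro k i
    have htend : Filter.Tendsto (fun m => q m i) Filter.atTop (nhds (qstar i)) :=
      (tendsto_pi_nhds.mp hconv) i
    apply ge_of_tendsto htend
    filter_upwards [Filter.eventually_ge_atTop k] with m hm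
    exact hle k m hm i
  intro i hi
  simp only [Set.mem_setOf_eq] at hi ⊢
  have h1 : 0 < q k i := lt_of_le_of_ne (hnn k i) (Ne.symm hi)
  have h2 : 0 < qstar i := lt_of_lt_of_le h1 (hstar k i)
  exact ne_of_gt h2
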